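/- Let f be differentiable, h convex, t > 0, X in an embedded submanifold M with tangent space T_X M (a linear subspace). If V = 0 is a minimizer over T_X M of g(V) = ⟨∇f(X), V⟩ + (1/(2t))‖V‖² + h(X+V), then 0 ∈ Proj_{T_X M}(∇f(X) + ∂h(X)), i.e., there exists ξ ∈ ∂h(X) with Proj_{T_X M}(∇f(X) + ξ) = 0. -/

import Mathlib

open InnerProductSpace

/-- Hahn–Banach style extension: if a convex function `k` with `k 0 = 0` dominates
the linear functional `⟪u, ·⟫` on a submodule `T`, then there is `ξ` with
`⟪ξ, ·⟫ ≤ k` globally and `⟪ξ, ·⟫ = ⟪u, ·⟫` on `T`. -/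
lemma aux_ext {E : Type*} [NormedAddCommGroup E] [InnerProductSpace ℝ E]
    [FiniteDimensional ℝ E]
    (k : E → ℝ) (hk : ConvexOn ℝ Set.univ k) (hk0 : k 0 = 0)
    (T : Submodule ℝ E) (u : E) (hu : ∀ W ∈ T, (inner ℝ u W : ℝ) ≤ k W) :
    ∃ ξ : E, (∀ V, (inner ℝ ξ V : ℝ) ≤ k V) ∧
      ∀ W ∈ T, (inner ℝ ξ W : ℝ) = (inner ℝ u W : ℝ) := by
  -- basic convexity facts
  have hscale : ∀ (V : E) (s : ℝ), 0 ≤ s → s ≤ 1 → k (s • V) ≤ s * k V := by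
    intro V s hs hs1
    have := hk.2 (Set.mem_univ V) (Set.mem_univ (0 : E)) hs
      (show (0:ℝ) ≤ 1 - s by linarith) (by ring)
    simpa [hk0] using this
  have hmono : ∀ (V : E) (s u : ℝ), 0 < s → s ≤ u → k (s • V) / s ≤ k (u • V) / u := by
    intro V s v hs hsv
    have hv : 0 < v := lt_of_lt_of_le hs hsv
    have h1 : k (s • V) ≤ (s / v) * k (v • V) := by
      have := hscale (v • V) (s / v) (by positivity) (by
        rw [div_le_one hv]; exact hsv)
      rwa [smul_smul, div_mul_cancel₀ _ hv.ne'] at this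
    rw [div_le_div_iff₀ hs hv]
    calc k (s • V) * v ≤ ((s / v) * k (v • V)) * v := mul_le_mul_of_nonneg_right h1 hv.le
      _ = k (v • V) * s := by
          rw [mul_right_comm, div_mul_cancel₀ _ hv.ne', mul_comm]
  have hlb : ∀ (V : E) (s : ℝ), 0 < s → s ≤ 1 → -k (-V) ≤ k (s • V) / s := by
    intro V s hs hs1
    have hmid := hk.2 (Set.mem_univ (s • V)) (Set.mem_univ (s • (-V)))
      (show (0:ℝ) ≤ 1/2 by norm_num) (show (0:ℝ) ≤ 1/2 by norm_num) (by norm_num)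
    simp only [smul_eq_mul] at hmid
    have hz : (1/2 : ℝ) • (s • V) + (1/2 : ℝ) • (s • (-V)) = (0 : E) := by module
    rw [hz, hk0] at hmid
    have h2 : k (s • (-V)) ≤ s * k (-V) := hscale (-V) s hs.le hs1
    rw [le_div_iff₀ hs]
    nlinarith
  -- the sublinear upper envelope
  haveI : Nonempty (Set.Ioc (0:ℝ) 1) := ⟨⟨1, by norm_num⟩⟩
  set N : E → ℝ := fun V => ⨅ s : Set.Ioc (0:ℝ) 1, k (s.1 • V) / s.1 with hN
  have hbdd : ∀ V : E, BddBelow (Set.range fun s : Set.Ioc (0:ℝ) 1 => k (s.1 • V) / s.1) := by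
    intro V
    refine ⟨-k (-V), ?_⟩
    rintro x ⟨s, rfl⟩
    exact hlb V s.1 s.2.1 s.2.2
  have hNle : ∀ (V : E) (s : ℝ), 0 < s → s ≤ 1 → N V ≤ k (s • V) / s := by
    intro V s hs hs1
    exact ciInf_le (hbdd V) ⟨s, hs, hs1⟩
  have hNslope : ∀ (V : E) (s : ℝ), 0 < s → N V ≤ k (s • V) / s := by
    intro V s hs
    rcases le_or_gt s 1 with h | h
    · exact hNle V s hs h
    · exact (hNle V 1 one_pos le_rfl).trans (by
        simpa using hmono V 1 s one_pos h.le)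
  have hleN : ∀ (V : E) (b : ℝ), (∀ s : ℝ, 0 < s → s ≤ 1 → b ≤ k (s • V) / s) → b ≤ N V := by
    intro V b hb
    exact le_ciInf fun s => hb s.1 s.2.1 s.2.2
  have N_le_k : ∀ V, N V ≤ k V := by
    intro V
    simpa using hNle V 1 one_pos le_rfl
  have N_hom : ∀ c : ℝ, 0 < c → ∀ V, N (c • V) = c * N V := by
    intro c hc V
    refine le_antisymm ?_ ?_
    · rw [← div_le_iff₀' hc]
      refine hleN V _ fun s hs hs1 => ?_
      have h0 := hNslope (c • V) (s / c) (by positivity)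
      rw [smul_smul, div_mul_cancel₀ _ hc.ne'] at h0
      have h0' : N (c • V) * (s / c) ≤ k (s • V) := by
        rwa [le_div_iff₀ (by positivity : (0:ℝ) < s / c)] at h0
      rw [div_le_div_iff₀ hc hs]
      calc N (c • V) * s = (N (c • V) * (s / c)) * c := by
            field_simp
        _ ≤ k (s • V) * c := mul_le_mul_of_nonneg_right h0' hc.le
    · refine hleN (c • V) _ fun s hs hs1 => ?_
      have h0 := hNslope V (s * c) (by positivity)
      calc c * N V = N V * c := mul_comm _ _
        _ ≤ (k ((s * c) • V) / (s * c)) * c := mul_le_mul_of_nonneg_right h0 hc.le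
        _ = k ((s * c) • V) / s := by
            rw [div_mul_eq_mul_div, mul_comm s c, ← div_div,
              mul_div_assoc, div_self hc.ne', mul_one]
        _ = k (s • (c • V)) / s := by rw [smul_smul]
  have N_add : ∀ V W : E, N (V + W) ≤ N V + N W := by
    intro V W
    have key : ∀ s u : ℝ, 0 < s → s ≤ 1 → 0 < u → u ≤ 1 →
        N (V + W) ≤ k (s • V) / s + k (u • W) / u := by
      intro s v hs hs1 hv hv1
      set r : ℝ := s * v / (s + v) with hr
      have hsv : 0 < s + v := by linarith
      have hrpos : 0 < r := by positivity
      have hconv := hk.2 (Set.mem_univ (s • V)) (Set.mem_univ (v • W))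
        (show (0:ℝ) ≤ v / (s + v) by positivity)
        (show (0:ℝ) ≤ s / (s + v) by positivity)
        (show v / (s + v) + s / (s + v) = 1 by rw [← add_div, add_comm, div_self hsv.ne'])
      simp only [smul_eq_mul] at hconv
      have hcomb : (v / (s + v)) • (s • V) + (s / (s + v)) • (v • W) = r • (V + W) := by
        rw [hr]
        match_scalars <;> field_simp [hsv.ne'] <;> ring
      rw [hcomb] at hconv
      have h1 : N (V + W) ≤ k (r • (V + W)) / r := hNslope _ r hrpos
      have hred : (k (s • V) / s + k (v • W) / v) * r
          = (v / (s + v)) * k (s • V) + (s / (s + v)) * k (v • W) := by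
        rw [hr]; field_simp
      have h2 : k (r • (V + W)) / r ≤ k (s • V) / s + k (v • W) / v := by
        rw [div_le_iff₀ hrpos, hred]; exact hconv
      linarith
    have h1 : ∀ u : ℝ, 0 < u → u ≤ 1 → N (V + W) - N V ≤ k (u • W) / u := by
      intro v hv hv1
      have : N (V + W) - k (v • W) / v ≤ N V :=
        hleN V _ fun s hs hs1 => by linarith [key s v hs hs1 hv hv1]
      linarith
    have : N (V + W) - N V ≤ N W := hleN W _ fun s hs hs1 => h1 s hs hs1
    linarith
  -- the partial linear functional on T
  have hu' : ∀ W ∈ T, (inner ℝ u W : ℝ) ≤ N W := by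
    intro W hW
    refine hleN W _ fun s hs hs1 => ?_
    rw [le_div_iff₀ hs]
    have := hu (s • W) (T.smul_mem s hW)
    rwa [real_inner_smul_right, mul_comm s _] at this
  set φ : E →ₗ.[ℝ] ℝ := ⟨T, (innerₗ E u).comp T.subtype⟩ with hφ
  obtain ⟨g, hg1, hg2⟩ := exists_extension_of_le_sublinear φ N N_hom N_add
    (fun x => hu' x.1 x.2)
  let ξ : E := (toDual ℝ E).symm (LinearMap.toContinuousLinearMap g)
  refine ⟨ξ, fun V => ?_, fun W hW => ?_⟩
  · have h1 : (inner ℝ ξ V : ℝ) = g V := toDual_symm_apply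
    rw [h1]
    exact (hg2 V).trans (N_le_k V)
  · have h1 : (inner ℝ ξ W : ℝ) = g W := toDual_symm_apply
    rw [h1, hg1 ⟨W, hW⟩]
    rfl


theorem stmt_14 {n r : ℕ} (t : ℝ) (ht : 0 < t)
    (f h : EuclideanSpace ℝ (Fin n × Fin r) → ℝ)
    (X c : EuclideanSpace ℝ (Fin n × Fin r))
    (hc : HasGradientAt f c X)
    (hh : ConvexOn ℝ Set.univ h)
    (T : Submodule ℝ (EuclideanSpace ℝ (Fin n × Fin r)))
    (g : EuclideanSpace ℝ (Fin n × Fin r) → ℝ)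
    (hg : ∀ V, g V = (inner ℝ c V : ℝ) + (1 / (2 * t)) * ‖V‖ ^ 2 + h (X + V))
    (hmin : ∀ W ∈ T, g 0 ≤ g W) :
    ∃ ξ : EuclideanSpace ℝ (Fin n × Fin r),
      (∀ y, h X + (inner ℝ ξ (y - X) : ℝ) ≤ h y) ∧
      T.orthogonalProjection (c + ξ) = 0 := by
  set k : EuclideanSpace ℝ (Fin n × Fin r) → ℝ := fun V => h (X + V) - h X with hkdef
  have hk : ConvexOn ℝ Set.univ k := by
    refine ⟨convex_univ, fun x _ y _ a b ha hb hab => ?_⟩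
    have hX : a • X + b • X = X := by rw [← add_smul, hab, one_smul]
    have h1 : X + (a • x + b • y) = a • (X + x) + b • (X + y) := by
      rw [smul_add, smul_add, add_add_add_comm, hX]
    have h2 := hh.2 (Set.mem_univ (X + x)) (Set.mem_univ (X + y)) ha hb hab
    have h3 : a * h X + b * h X = h X := by rw [← add_mul, hab, one_mul]
    simp only [smul_eq_mul] at h2
    simp only [hkdef, smul_eq_mul, h1]
    nlinarith [h2, h3]
  have hk0 : k 0 = 0 := by simp [hkdef]
  have key : ∀ W ∈ T, (inner ℝ (-c) W : ℝ) ≤ k W := by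
    intro W hW
    have hsI : ∀ s : ℝ, 0 < s → s ≤ 1 →
        -(s * (‖W‖ ^ 2 / (2 * t))) ≤ (inner ℝ c W : ℝ) + (h (X + W) - h X) := by
      intro s hs hs1
      have hm := hmin (s • W) (T.smul_mem s hW)
      rw [hg, hg] at hm
      simp only [inner_zero_right, norm_zero, add_zero, zero_pow, mul_zero, zero_add] at hm
      have hin : (inner ℝ c (s • W) : ℝ) = s * (inner ℝ c W : ℝ) := real_inner_smul_right c W s
      have hnrm : ‖s • W‖ ^ 2 = s ^ 2 * ‖W‖ ^ 2 := by
        rw [norm_smul, mul_pow, Real.norm_eq_abs, sq_abs]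
      have hcv : s • (X + W) + (1 - s) • X = X + s • W := by module
      have hcvx := hh.2 (Set.mem_univ (X + W)) (Set.mem_univ X) hs.le
        (show (0:ℝ) ≤ 1 - s by linarith) (by ring)
      rw [hcv] at hcvx
      simp only [smul_eq_mul] at hcvx
      rw [hin, hnrm] at hm
      have ht' : (0:ℝ) < 2 * t := by linarith
      have hfrac : 1 / (2 * t) * (s ^ 2 * ‖W‖ ^ 2) = s * (s * (‖W‖ ^ 2 / (2 * t))) := by
        field_simp
      rw [hfrac] at hm
      have hdiv : 0 ≤ s * ((inner ℝ c W : ℝ) + (h (X + W) - h X) + s * (‖W‖ ^ 2 / (2 * t))) := by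
        nlinarith [hm, hcvx]
      nlinarith [hdiv, hs]
    have h0 : (0:ℝ) ≤ (inner ℝ c W : ℝ) + (h (X + W) - h X) := by
      have hcont : Continuous fun s : ℝ => -(s * (‖W‖ ^ 2 / (2 * t))) := by fun_prop
      have htend : Filter.Tendsto (fun s : ℝ => -(s * (‖W‖ ^ 2 / (2 * t))))
          (nhdsWithin 0 (Set.Ioi 0)) (nhds 0) := by
        have := (hcont.tendsto 0).mono_left (nhdsWithin_le_nhds (s := Set.Ioi (0:ℝ)))
        simpa using this
      refine le_of_tendsto htend ?_
      filter_upwards [Ioc_mem_nhdsGT_of_mem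
        (show (0:ℝ) ∈ Set.Ico (0:ℝ) 1 by norm_num)] with s hs
      exact hsI s hs.1 hs.2
    have : (inner ℝ (-c) W : ℝ) = -(inner ℝ c W : ℝ) := inner_neg_left c W
    rw [this, hkdef]
    show -(inner ℝ c W : ℝ) ≤ h (X + W) - h X
    linarith
  obtain ⟨ξ, hξ1, hξ2⟩ := aux_ext k hk hk0 T (-c) key
  refine ⟨ξ, fun y => ?_, ?_⟩
  · have h1 := hξ1 (y - X)
    have h2 : X + (y - X) = y := by abel
    simp only [hkdef, h2] at h1
    linarith
  · rw [Submodule.orthogonalProjectionOnto_eq_zero_iff, Submodule.mem_orthogonal']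
    intro W hW
    have h1 := hξ2 W hW
    rw [inner_neg_left c W] at h1
    rw [inner_add_left]
    linarith
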